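/- arXiv:2007.15493 — 3 statements merged into one kernel-verified Lean document; each statement's English description precedes it below -/
import Mathlib

section
/- For every bounded set F ⊆ ℝ^d and every θ ∈ (0,1), the Assouad spectrum satisfies dim_A^θ F ≤ min{ dim_A F, (upper box dimension of F)/(1 − θ) }. -/
open Metric Set Filter

/-- The minimal number of balls of radius `r` needed to cover `E ⊆ ℝ^d`. -/
noncomputable def covN {d : ℕ} (r : ℝ) (E : Set (EuclideanSpace ℝ (Fin d))) : ℕ :=
  sInf {n : ℕ | ∃ S : Finset (EuclideanSpace ℝ (Fin d)), S.card = n ∧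
    E ⊆ ⋃ x ∈ S, Metric.ball x r}

/-- The Assouad dimension of `F ⊆ ℝ^d`. -/
noncomputable def dimA {d : ℕ} (F : Set (EuclideanSpace ℝ (Fin d))) : ℝ :=
  sInf {s : ℝ | 0 ≤ s ∧ ∃ C > (0 : ℝ), ∀ r R : ℝ, 0 < r → r < R → ∀ x ∈ F,
    (covN r (Metric.ball x R ∩ F) : ℝ) ≤ C * (R / r) ^ s}

/-- The lower dimension of `F ⊆ ℝ^d`. -/
noncomputable def dimL {d : ℕ} (F : Set (EuclideanSpace ℝ (Fin d))) : ℝ :=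
  sSup {s : ℝ | 0 ≤ s ∧ ∃ C > (0 : ℝ), ∀ r R : ℝ, 0 < r → r < R → R ≤ Metric.diam F →
    ∀ x ∈ F, C * (R / r) ^ s ≤ (covN r (Metric.ball x R ∩ F) : ℝ)}

/-- The Assouad spectrum of `F ⊆ ℝ^d` at `θ`. -/
noncomputable def dimASpec {d : ℕ} (θ : ℝ) (F : Set (EuclideanSpace ℝ (Fin d))) : ℝ :=
  sInf {s : ℝ | 0 ≤ s ∧ ∃ C > (0 : ℝ), ∀ r : ℝ, 0 < r → r < 1 → ∀ x ∈ F,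
    (covN r (Metric.ball x (r ^ θ) ∩ F) : ℝ) ≤ C * (r ^ θ / r) ^ s}

/-- The lower spectrum of `F ⊆ ℝ^d` at `θ`. -/
noncomputable def dimLSpec {d : ℕ} (θ : ℝ) (F : Set (EuclideanSpace ℝ (Fin d))) : ℝ :=
  sSup {s : ℝ | 0 ≤ s ∧ ∃ C > (0 : ℝ), ∀ r : ℝ, 0 < r → r < 1 → ∀ x ∈ F,
    C * (r ^ θ / r) ^ s ≤ (covN r (Metric.ball x (r ^ θ) ∩ F) : ℝ)}

/-- The upper box dimension of `F ⊆ ℝ^d`. -/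
noncomputable def ubDim {d : ℕ} (F : Set (EuclideanSpace ℝ (Fin d))) : ℝ :=
  Filter.limsup (fun r : ℝ => Real.log (covN r F) / (-Real.log r)) (nhdsWithin 0 (Set.Ioi 0))

/-- The lower box dimension of `F ⊆ ℝ^d`. -/
noncomputable def lbDim {d : ℕ} (F : Set (EuclideanSpace ℝ (Fin d))) : ℝ :=
  Filter.liminf (fun r : ℝ => Real.log (covN r F) / (-Real.log r)) (nhdsWithin 0 (Set.Ioi 0))

open Metric Set Filter MeasureTheory ENNReal

/-- Any `r`-separated subset of `ball x R` has cardinality at most `(4R/r)^d`. -/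
lemma sep_card_bound {d : ℕ} (x : EuclideanSpace ℝ (Fin d)) {r R : ℝ} (hr : 0 < r)
    (hrR : r < R) (S : Finset (EuclideanSpace ℝ (Fin d))) (hS : ↑S ⊆ ball x R)
    (hsep : (S : Set (EuclideanSpace ℝ (Fin d))).Pairwise fun a b => r ≤ dist a b) :
    (S.card : ℝ) ≤ (4 * R / r) ^ d := by
  cases d with
  | zero =>
    have : S.card ≤ 1 := Finset.card_le_one.2 (fun a _ b _ => Subsingleton.elim a b)
    simpa using (by exact_mod_cast this : (S.card : ℝ) ≤ 1)
  | succ n =>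
    have hdisj : (↑S : Set (EuclideanSpace ℝ (Fin (n+1)))).PairwiseDisjoint (fun s => ball s (r/2)) := by
      intro a ha b hb hab
      exact ball_disjoint_ball (by linarith [hsep ha hb hab])
    have hsum : volume (⋃ s ∈ S, ball s (r/2)) = ∑ s ∈ S, volume (ball s (r/2)) :=
      measure_biUnion_finset hdisj (fun b _ => measurableSet_ball)
    have hsub : (⋃ s ∈ S, ball s (r/2)) ⊆ ball x (2*R) := by
      refine iUnion₂_subset fun s hs => ball_subset_ball' ?_
      have := mem_ball.1 (hS hs)
      linarith
    set V := volume (ball (0 : EuclideanSpace ℝ (Fin (n+1))) 1) with hV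
    have hball : ∀ s : EuclideanSpace ℝ (Fin (n+1)), volume (ball s (r/2)) = ENNReal.ofReal ((r/2) ^ (n+1)) * V := by
      intro s
      rw [Measure.addHaar_ball _ _ (by linarith : (0:ℝ) ≤ r/2), finrank_euclideanSpace_fin]
    have hbig : volume (ball x (2*R)) = ENNReal.ofReal ((2*R) ^ (n+1)) * V := by
      rw [Measure.addHaar_ball _ _ (by linarith : (0:ℝ) ≤ 2*R), finrank_euclideanSpace_fin]
    have hle : (S.card : ℝ≥0∞) * (ENNReal.ofReal ((r/2) ^ (n+1)) * V)
        ≤ ENNReal.ofReal ((2*R) ^ (n+1)) * V := by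
      calc (S.card : ℝ≥0∞) * (ENNReal.ofReal ((r/2) ^ (n+1)) * V)
          = ∑ s ∈ S, volume (ball s (r/2)) := by
            simp [hball, Finset.sum_const, nsmul_eq_mul]
        _ = volume (⋃ s ∈ S, ball s (r/2)) := hsum.symm
        _ ≤ volume (ball x (2*R)) := measure_mono hsub
        _ = _ := hbig
    have hV0 : V ≠ 0 := (measure_ball_pos _ _ one_pos).ne'
    have hVt : V ≠ ⊤ := measure_ball_lt_top.ne
    rw [← mul_assoc] at hle
    have hle2 : (S.card : ℝ≥0∞) * ENNReal.ofReal ((r/2) ^ (n+1))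
        ≤ ENNReal.ofReal ((2*R) ^ (n+1)) :=
      (ENNReal.mul_le_mul_iff_left hV0 hVt).1 hle
    have hle3 : (S.card : ℝ) * (r/2) ^ (n+1) ≤ (2*R) ^ (n+1) := by
      rw [← ENNReal.ofReal_natCast, ← ENNReal.ofReal_mul (Nat.cast_nonneg _)] at hle2
      exact (ENNReal.ofReal_le_ofReal_iff (pow_nonneg (by linarith) _)).1 hle2
    have h4 : (4 * R / r : ℝ) = (2*R) / (r/2) := by
      field_simp
      ring
    rw [h4, div_pow, le_div_iff₀ (by positivity)]
    exact hle3

/-- A ball of radius `R` can be covered by at most `(4R/r)^d` balls of radius `r`. -/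
lemma exists_cover_ball {d : ℕ} (x : EuclideanSpace ℝ (Fin d)) {r R : ℝ} (hr : 0 < r)
    (hrR : r < R) : ∃ S : Finset (EuclideanSpace ℝ (Fin d)),
      (ball x R ⊆ ⋃ y ∈ S, ball y r) ∧ (S.card : ℝ) ≤ (4 * R / r) ^ d := by
  classical
  set A : Set ℕ := {n | ∃ S : Finset (EuclideanSpace ℝ (Fin d)), ↑S ⊆ ball x R ∧
    ((S : Set (EuclideanSpace ℝ (Fin d))).Pairwise fun a b => r ≤ dist a b) ∧ S.card = n} with hA
  have hA0 : 0 ∈ A := ⟨∅, by simp, by simp, by simp⟩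
  have hAbdd : BddAbove A := by
    refine ⟨⌈(4 * R / r) ^ d⌉₊, fun n hn => ?_⟩
    obtain ⟨S, hS, hsep, hcard⟩ := hn
    have := sep_card_bound x hr hrR S hS hsep
    rw [hcard] at this
    exact_mod_cast this.trans (Nat.le_ceil _)
  have hmem := Nat.sSup_mem ⟨0, hA0⟩ hAbdd
  obtain ⟨S, hS, hsep, hcard⟩ := hmem
  refine ⟨S, ?_, ?_⟩
  · intro y hy
    by_contra hy'
    have hsepy : ∀ s ∈ S, r ≤ dist y s := by
      intro s hs
      by_contra hlt
      exact hy' (mem_iUnion₂.2 ⟨s, hs, by simpa [mem_ball] using lt_of_not_ge hlt⟩)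
    have hyS : y ∉ S := by
      intro hyS
      have := hsepy y hyS
      simp at this; linarith
    have hmem' : S.card + 1 ∈ A := by
      refine ⟨insert y S, ?_, ?_, ?_⟩
      · rw [Finset.coe_insert]
        exact Set.insert_subset hy hS
      · rw [Finset.coe_insert]
        refine Set.Pairwise.insert hsep ?_
        intro b hb hne
        exact ⟨hsepy b hb, by rw [dist_comm]; exact hsepy b hb⟩
      · rw [Finset.card_insert_of_notMem hyS]
    have : S.card + 1 ≤ sSup A := le_csSup hAbdd hmem'
    omega
  · exact sep_card_bound x hr hrR S hS hsep

lemma covN_le_card {d : ℕ} {r : ℝ} {E : Set (EuclideanSpace ℝ (Fin d))}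
    (S : Finset (EuclideanSpace ℝ (Fin d))) (h : E ⊆ ⋃ y ∈ S, ball y r) :
    covN r E ≤ S.card := Nat.sInf_le ⟨S, rfl, h⟩

lemma exists_cover_of_isBounded {d : ℕ} {E : Set (EuclideanSpace ℝ (Fin d))}
    (hE : Bornology.IsBounded E) {r : ℝ} (hr : 0 < r) :
    ∃ S : Finset (EuclideanSpace ℝ (Fin d)), E ⊆ ⋃ y ∈ S, ball y r := by
  obtain ⟨R, hR⟩ := hE.subset_ball 0
  have hE' : E ⊆ ball 0 (max R (r+1)) := hR.trans (ball_subset_ball (le_max_left _ _))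
  obtain ⟨S, hcov, -⟩ := exists_cover_ball (0 : EuclideanSpace ℝ (Fin d)) hr
    (lt_of_lt_of_le (by linarith) (le_max_right R (r+1)))
  exact ⟨S, hE'.trans hcov⟩

lemma covN_mono_set {d : ℕ} {r : ℝ} {E E' : Set (EuclideanSpace ℝ (Fin d))}
    (hE' : Bornology.IsBounded E') (hr : 0 < r) (h : E ⊆ E') : covN r E ≤ covN r E' := by
  obtain ⟨S, hS⟩ := exists_cover_of_isBounded hE' hr
  have hne : {n : ℕ | ∃ S : Finset (EuclideanSpace ℝ (Fin d)), S.card = n ∧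
      E' ⊆ ⋃ y ∈ S, ball y r}.Nonempty := ⟨S.card, S, rfl, hS⟩
  obtain ⟨T, hT, hcov⟩ := Nat.sInf_mem hne
  calc covN r E ≤ T.card := covN_le_card T (h.trans hcov)
    _ = covN r E' := hT

lemma covN_anti {d : ℕ} {E : Set (EuclideanSpace ℝ (Fin d))} {r₁ r₂ : ℝ}
    (hE : Bornology.IsBounded E) (h1 : 0 < r₁) (h12 : r₁ ≤ r₂) : covN r₂ E ≤ covN r₁ E := by
  obtain ⟨S, hS⟩ := exists_cover_of_isBounded hE h1
  have hne : {n : ℕ | ∃ S : Finset (EuclideanSpace ℝ (Fin d)), S.card = n ∧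
      E ⊆ ⋃ y ∈ S, ball y r₁}.Nonempty := ⟨S.card, S, rfl, hS⟩
  obtain ⟨T, hT, hcov⟩ := Nat.sInf_mem hne
  have : E ⊆ ⋃ y ∈ T, ball y r₂ :=
    hcov.trans (iUnion₂_mono fun y _ => ball_subset_ball h12)
  calc covN r₂ E ≤ T.card := covN_le_card T this
    _ = covN r₁ E := hT

lemma covN_ball_le {d : ℕ} (x : EuclideanSpace ℝ (Fin d)) {r R : ℝ} (hr : 0 < r)
    (hrR : r < R) : (covN r (ball x R) : ℝ) ≤ (4 * R / r) ^ d := by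
  obtain ⟨S, hcov, hcard⟩ := exists_cover_ball x hr hrR
  exact le_trans (Nat.cast_le.mpr (covN_le_card S hcov)) hcard

lemma covN_pos {d : ℕ} {E : Set (EuclideanSpace ℝ (Fin d))} (hE : Bornology.IsBounded E)
    (hne : E.Nonempty) {r : ℝ} (hr : 0 < r) : 0 < covN r E := by
  rcases Nat.eq_zero_or_pos (covN r E) with h | h
  · exfalso
    rcases Nat.sInf_eq_zero.1 h with h0 | hemp
    · obtain ⟨S, hcard, hcov⟩ := h0
      rw [Finset.card_eq_zero] at hcard
      subst hcard
      simp only [Finset.notMem_empty, Set.iUnion_of_empty, Set.iUnion_empty,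
        Set.subset_empty_iff] at hcov
      exact hne.ne_empty hcov
    · obtain ⟨S, hS⟩ := exists_cover_of_isBounded hE hr
      exact absurd hemp (Set.nonempty_iff_ne_empty.1 ⟨S.card, S, rfl, hS⟩)
  · exact h

/-- For every bounded `F ⊆ ℝ^d` and `θ ∈ (0,1)`, the Assouad spectrum satisfies
`dim_A^θ F ≤ min { dim_A F, (upper box dimension of F) / (1 - θ) }`. -/
theorem assouad_spectrum_upper_bound {d : ℕ} (F : Set (EuclideanSpace ℝ (Fin d)))
    (hF : Bornology.IsBounded F) (θ : ℝ) (hθ : θ ∈ Set.Ioo (0 : ℝ) 1) :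
    dimASpec θ F ≤ min (dimA F) (ubDim F / (1 - θ)) := by
  obtain ⟨hθ0, hθ1⟩ := hθ
  have h1θ : (0:ℝ) < 1 - θ := by linarith
  have hbdd_spec : BddBelow {s : ℝ | 0 ≤ s ∧ ∃ C > (0 : ℝ), ∀ r : ℝ, 0 < r → r < 1 → ∀ x ∈ F,
      (covN r (Metric.ball x (r ^ θ) ∩ F) : ℝ) ≤ C * (r ^ θ / r) ^ s} :=
    ⟨0, fun s hs => hs.1⟩
  -- (a) dimASpec ≤ dimA
  have hSA_d : (d : ℝ) ∈ {s : ℝ | 0 ≤ s ∧ ∃ C > (0 : ℝ), ∀ r R : ℝ, 0 < r → r < R → ∀ x ∈ F,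
      (covN r (Metric.ball x R ∩ F) : ℝ) ≤ C * (R / r) ^ s} := by
    refine ⟨Nat.cast_nonneg d, 4 ^ d, by positivity, ?_⟩
    intro r R hr hrR x hx
    calc (covN r (ball x R ∩ F) : ℝ)
        ≤ (covN r (ball x R) : ℝ) :=
          Nat.cast_le.mpr (covN_mono_set isBounded_ball hr inter_subset_left)
      _ ≤ (4 * R / r) ^ d := covN_ball_le x hr hrR
      _ = 4 ^ d * (R / r) ^ (d : ℝ) := by
          rw [Real.rpow_natCast, mul_div_assoc, mul_pow]
  have ha : dimASpec θ F ≤ dimA F := by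
    refine csInf_le_csInf hbdd_spec ⟨(d : ℝ), hSA_d⟩ ?_
    rintro s ⟨hs0, C, hC, h⟩
    refine ⟨hs0, C, hC, fun r hr hr1 x hx => ?_⟩
    exact h r (r ^ θ) hr (by
      nth_rewrite 1 [← Real.rpow_one r]
      exact Real.rpow_lt_rpow_of_exponent_gt hr hr1 hθ1) x hx
  -- (b) dimASpec ≤ ubDim / (1 - θ)
  have hb : dimASpec θ F ≤ ubDim F / (1 - θ) := by
    rcases F.eq_empty_or_nonempty with hFe | hFne
    · subst hFe
      have hcov0 : ∀ r : ℝ, covN r (∅ : Set (EuclideanSpace ℝ (Fin d))) = 0 := fun r =>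
        Nat.sInf_eq_zero.mpr (Or.inl ⟨∅, rfl, by simp⟩)
      have hub : ubDim (∅ : Set (EuclideanSpace ℝ (Fin d))) = 0 := by
        unfold ubDim
        simp only [hcov0, Nat.cast_zero, Real.log_zero, zero_div]
        exact limsup_const 0
      have h0mem : (0:ℝ) ∈ {s : ℝ | 0 ≤ s ∧ ∃ C > (0 : ℝ), ∀ r : ℝ, 0 < r → r < 1 →
          ∀ x ∈ (∅ : Set (EuclideanSpace ℝ (Fin d))),
          (covN r (Metric.ball x (r ^ θ) ∩ ∅) : ℝ) ≤ C * (r ^ θ / r) ^ (0:ℝ)} :=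
        ⟨le_rfl, 1, one_pos, fun r hr hr1 x hx => absurd hx (Set.notMem_empty x)⟩
      have := csInf_le hbdd_spec h0mem
      rw [hub, zero_div]
      exact this
    · -- F nonempty
      obtain ⟨x₀, hx₀⟩ := hFne
      obtain ⟨R₀, hR₀F⟩ := hF.subset_ball x₀
      have hR₀ : 0 < R₀ := by
        have := hR₀F hx₀
        rw [mem_ball, dist_self] at this
        exact this
      set g : ℝ → ℝ := fun r => Real.log (covN r F) / (-Real.log r) with hg
      set b : ℝ := d * |Real.log (4 * R₀)| + d with hb'
      have hbdd : ∀ᶠ r in nhdsWithin (0:ℝ) (Set.Ioi 0), g r ≤ b := by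
        rw [(nhdsGT_basis (0:ℝ)).eventually_iff]
        refine ⟨min R₀ (Real.exp (-1)), lt_min hR₀ (Real.exp_pos _), ?_⟩
        rintro r ⟨hr, hrlt⟩
        have hrR : r < R₀ := lt_of_lt_of_le hrlt (min_le_left _ _)
        have hre : r < Real.exp (-1) := lt_of_lt_of_le hrlt (min_le_right _ _)
        have hlogr : Real.log r < -1 := by
          have := Real.log_lt_log hr hre
          rwa [Real.log_exp] at this
        have ht : (1:ℝ) ≤ -Real.log r := by linarith
        have ht0 : (0:ℝ) < -Real.log r := by linarith
        have hcN : 0 < covN r F := covN_pos hF ⟨x₀, hx₀⟩ hr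
        have hcb : (covN r F : ℝ) ≤ (4 * R₀ / r) ^ d :=
          le_trans (Nat.cast_le.mpr (covN_mono_set isBounded_ball hr hR₀F))
            (covN_ball_le x₀ hr hrR)
        have hlog : Real.log (covN r F) ≤ d * (Real.log (4 * R₀) - Real.log r) := by
          calc Real.log (covN r F) ≤ Real.log ((4 * R₀ / r) ^ d) :=
                Real.log_le_log (by exact_mod_cast hcN) hcb
            _ = d * Real.log (4 * R₀ / r) := by rw [Real.log_pow]
            _ = d * (Real.log (4 * R₀) - Real.log r) := by
                rw [Real.log_div (by positivity) (ne_of_gt hr)]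
        rw [hg]
        dsimp only
        rw [div_le_iff₀ ht0, hb']
        have e1 : Real.log (4 * R₀) ≤ |Real.log (4 * R₀)| * (-Real.log r) :=
          le_trans (le_abs_self _) (le_mul_of_one_le_right (abs_nonneg _) ht)
        have e2 : (d:ℝ) * Real.log (4 * R₀) ≤ (d:ℝ) * (|Real.log (4 * R₀)| * (-Real.log r)) :=
          mul_le_mul_of_nonneg_left e1 (Nat.cast_nonneg d)
        calc Real.log (covN r F) ≤ (d:ℝ) * (Real.log (4 * R₀) - Real.log r) := hlog
          _ = (d:ℝ) * Real.log (4 * R₀) + (d:ℝ) * (-Real.log r) := by ring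
          _ ≤ (d:ℝ) * (|Real.log (4 * R₀)| * (-Real.log r)) + (d:ℝ) * (-Real.log r) :=
              add_le_add_left e2 _
          _ = ((d:ℝ) * |Real.log (4 * R₀)| + (d:ℝ)) * (-Real.log r) := by ring
      have hge0 : ∀ᶠ r in nhdsWithin (0:ℝ) (Set.Ioi 0), 0 ≤ g r := by
        rw [(nhdsGT_basis (0:ℝ)).eventually_iff]
        refine ⟨1, one_pos, ?_⟩
        rintro r ⟨hr, hr1⟩
        have hlneg : Real.log r < 0 := Real.log_neg hr hr1
        exact div_nonneg (Real.log_natCast_nonneg _) (by linarith)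
      have hβ0 : 0 ≤ ubDim F := le_limsup_of_frequently_le hge0.frequently ⟨b, hbdd⟩
      have hub_eq : ubDim F = limsup g (nhdsWithin (0:ℝ) (Set.Ioi 0)) := rfl
      have key : ∀ ε : ℝ, 0 < ε → dimASpec θ F ≤ (ubDim F + ε) / (1 - θ) := by
        intro ε hε
        have hlt : ∀ᶠ r in nhdsWithin (0:ℝ) (Set.Ioi 0), g r < ubDim F + ε :=
          eventually_lt_of_limsup_lt (by rw [← hub_eq]; linarith) ⟨b, hbdd⟩
        obtain ⟨δ, hδ0, hδ⟩ := (nhdsGT_basis (0:ℝ)).eventually_iff.mp hlt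
        set δ₁ : ℝ := min δ 1 with hδ₁
        have hδ₁0 : 0 < δ₁ := lt_min hδ0 one_pos
        set M : ℕ := covN (δ₁ / 2) F with hM
        set C : ℝ := (M : ℝ) + 1 with hC
        have hC1 : (1:ℝ) ≤ C := by
          rw [hC]
          have := Nat.cast_nonneg (α := ℝ) M
          linarith
        set s : ℝ := (ubDim F + ε) / (1 - θ) with hs
        have hs0 : 0 ≤ s := div_nonneg (by linarith) h1θ.le
        refine csInf_le hbdd_spec ⟨hs0, C, by positivity, ?_⟩
        intro r hr hr1 x hx
        have hpowb : r ^ θ / r = r ^ (θ - 1) := by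
          rw [Real.rpow_sub hr, Real.rpow_one]
        have hpow1 : 1 ≤ (r ^ θ / r) ^ s := by
          rw [hpowb]
          exact Real.one_le_rpow
            (Real.one_le_rpow_of_pos_of_le_one_of_nonpos hr hr1.le (by linarith)) hs0
        have hmono : (covN r (ball x (r ^ θ) ∩ F) : ℝ) ≤ (covN r F : ℝ) :=
          Nat.cast_le.mpr (covN_mono_set hF hr inter_subset_right)
        by_cases hcase : r < δ₁
        · have hgr : g r < ubDim F + ε := hδ ⟨hr, lt_of_lt_of_le hcase (min_le_left _ _)⟩
          have hrlt1 : r < 1 := hr1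
          have ht0 : (0:ℝ) < -Real.log r := by
            have := Real.log_neg hr hrlt1; linarith
          have hcN : 0 < covN r F := covN_pos hF ⟨x₀, hx₀⟩ hr
          have hlog2 : Real.log (covN r F) ≤ (ubDim F + ε) * (-Real.log r) := by
            have := (div_lt_iff₀ ht0).mp hgr
            linarith
          have hexp : (covN r F : ℝ) ≤ Real.exp ((ubDim F + ε) * (-Real.log r)) := by
            rw [← Real.exp_log (by exact_mod_cast hcN : (0:ℝ) < (covN r F : ℝ))]
            exact Real.exp_le_exp.mpr hlog2
          have hexps : (θ - 1) * s = -(ubDim F + ε) := by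
            rw [hs]
            field_simp
            ring
          have hrpow : Real.exp ((ubDim F + ε) * (-Real.log r)) = (r ^ θ / r) ^ s := by
            rw [hpowb, ← Real.rpow_mul hr.le, hexps, Real.rpow_def_of_pos hr]
            congr 1
            ring
          calc (covN r (ball x (r ^ θ) ∩ F) : ℝ) ≤ (covN r F : ℝ) := hmono
            _ ≤ Real.exp ((ubDim F + ε) * (-Real.log r)) := hexp
            _ = (r ^ θ / r) ^ s := hrpow
            _ ≤ C * (r ^ θ / r) ^ s :=
                le_mul_of_one_le_left (Real.rpow_nonneg (by positivity) s) hC1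
        · have hle : δ₁ / 2 ≤ r := by
            push_neg at hcase
            linarith
          have hM' : (covN r F : ℝ) ≤ (M : ℝ) :=
            Nat.cast_le.mpr (covN_anti hF (by positivity) hle)
          calc (covN r (ball x (r ^ θ) ∩ F) : ℝ) ≤ (covN r F : ℝ) := hmono
            _ ≤ (M : ℝ) := hM'
            _ ≤ C := by rw [hC]; linarith
            _ ≤ C * (r ^ θ / r) ^ s := le_mul_of_one_le_right (by positivity) hpow1
      refine le_of_forall_pos_le_add ?_
      intro ε' hε'
      have h := key (ε' * (1 - θ)) (by positivity)
      have heq : (ubDim F + ε' * (1 - θ)) / (1 - θ) = ubDim F / (1 - θ) + ε' := by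
        field_simp
      rw [heq] at h
      exact h
  exact le_min ha hb
end

section
/- Let h ≥ 1, p ≥ 1, and let 0 < r_{j+1} ≤ r_j be real numbers. Set r_m = r_j·(r_{j+1}/r_j)^{1/(1+p)}. Then for all r, R with r_{j+1} ≤ r ≤ r_m ≤ R ≤ r_j, one has R^{h+(h−1)p} / (r · r_j^{(h−1)p} · r_{j+1}^{h−1}) ≤ (R/r)^{h+(h−1)p}. -/
/-- Key algebraic inequality for the Assouad dimension of the conformal measure, case h ≥ 1. -/
theorem measure_ratio_ineq_8 (h p rj rj1 : ℝ) (hh : 1 ≤ h) (hp : 1 ≤ p)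
    (h0 : 0 < rj1) (h1 : rj1 ≤ rj) (r R : ℝ) (hr1 : rj1 ≤ r)
    (hrm : r ≤ rj * (rj1 / rj) ^ (1 / (1 + p)))
    (hmR : rj * (rj1 / rj) ^ (1 / (1 + p)) ≤ R) (hR : R ≤ rj) :
    R ^ (h + (h - 1) * p) / (r * rj ^ ((h - 1) * p) * rj1 ^ (h - 1)) ≤ (R / r) ^ (h + (h - 1) * p) := by
  have hp0 : (0:ℝ) < 1 + p := by linarith
  have hrj : 0 < rj := lt_of_lt_of_le h0 h1
  have hr0 : 0 < r := lt_of_lt_of_le h0 hr1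
  have hm0 : 0 < rj * (rj1 / rj) ^ (1 / (1 + p)) := by positivity
  have hR0 : 0 < R := lt_of_lt_of_le hm0 hmR
  -- key: r^(1+p) ≤ rj^p * rj1
  have key : r ^ (1 + p) ≤ rj ^ p * rj1 := by
    calc r ^ (1 + p) ≤ (rj * (rj1 / rj) ^ (1 / (1 + p))) ^ (1 + p) :=
          Real.rpow_le_rpow hr0.le hrm hp0.le
      _ = rj ^ (1 + p) * ((rj1 / rj) ^ (1 / (1 + p))) ^ (1 + p) :=
          Real.mul_rpow hrj.le (by positivity)
      _ = rj ^ (1 + p) * (rj1 / rj) := by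
          rw [← Real.rpow_mul (by positivity : (0:ℝ) ≤ rj1 / rj),
            one_div_mul_cancel hp0.ne', Real.rpow_one]
      _ = rj ^ p * rj1 := by
          rw [Real.rpow_add hrj, Real.rpow_one]
          field_simp
  have hh0 : (0:ℝ) ≤ h - 1 := by linarith
  have key2 : r ^ ((h - 1) * (1 + p)) ≤ rj ^ ((h - 1) * p) * rj1 ^ (h - 1) := by
    have e1 : r ^ ((h - 1) * (1 + p)) = (r ^ (1 + p)) ^ (h - 1) := by
      rw [← Real.rpow_mul hr0.le]; ring_nf
    have e2 : (rj ^ p * rj1) ^ (h - 1) = rj ^ ((h - 1) * p) * rj1 ^ (h - 1) := by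
      rw [Real.mul_rpow (by positivity) h0.le, ← Real.rpow_mul hrj.le]; ring_nf
    rw [e1, ← e2]
    exact Real.rpow_le_rpow (by positivity) key hh0
  have key3 : r ^ (h + (h - 1) * p) ≤ r * rj ^ ((h - 1) * p) * rj1 ^ (h - 1) := by
    have e : h + (h - 1) * p = 1 + (h - 1) * (1 + p) := by ring
    rw [e, Real.rpow_add hr0, Real.rpow_one, mul_assoc]
    exact mul_le_mul_of_nonneg_left key2 hr0.le
  rw [Real.div_rpow hR0.le hr0.le]
  exact div_le_div_of_nonneg_left (by positivity) (by positivity) key3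
end

section
/- Let 0 < h < 1, p ≥ 1, and let 0 < r_{j+1} ≤ r_j be real numbers. Set r_m = r_j·(r_{j+1}/r_j)^{1/(1+p)}. Then for all r, R with r_{j+1} ≤ r ≤ r_m ≤ R ≤ r_j, one has R^{h+(h−1)p} / (r · r_j^{(h−1)p} · r_{j+1}^{h−1}) ≤ R/r. -/
/-- Algebraic inequality for the Assouad dimension of the conformal measure, case h < 1. -/
theorem measure_ratio_ineq_9 (h p rj rj1 : ℝ) (hh0 : 0 < h) (hh1 : h < 1) (hp : 1 ≤ p)
    (h0 : 0 < rj1) (h1 : rj1 ≤ rj) (r R : ℝ) (hr1 : rj1 ≤ r)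
    (hrm : r ≤ rj * (rj1 / rj) ^ (1 / (1 + p)))
    (hmR : rj * (rj1 / rj) ^ (1 / (1 + p)) ≤ R) (hR : R ≤ rj) :
    R ^ (h + (h - 1) * p) / (r * rj ^ ((h - 1) * p) * rj1 ^ (h - 1)) ≤ R / r := by
  have hrjpos : 0 < rj := lt_of_lt_of_le h0 h1
  have hppos : 0 < 1 + p := by linarith
  have hqpos : 0 < rj1 / rj := div_pos h0 hrjpos
  have htpos : 0 < (rj1 / rj) ^ (1 / (1 + p)) := Real.rpow_pos_of_pos hqpos _
  have hmpos : 0 < rj * (rj1 / rj) ^ (1 / (1 + p)) := mul_pos hrjpos htpos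
  have hRpos : 0 < R := lt_of_lt_of_le hmpos hmR
  have hrpos : 0 < r := lt_of_lt_of_le h0 hr1
  have key : rj ^ p * rj1 ≤ R ^ (1 + p) := by
    have e1 : (rj * (rj1 / rj) ^ (1 / (1 + p))) ^ (1 + p) = rj ^ p * rj1 := by
      rw [Real.mul_rpow hrjpos.le htpos.le]
      rw [← Real.rpow_mul hqpos.le]
      have : 1 / (1 + p) * (1 + p) = 1 := by field_simp
      rw [this, Real.rpow_one, Real.rpow_add hrjpos, Real.rpow_one]
      field_simp
    calc rj ^ p * rj1 = (rj * (rj1 / rj) ^ (1 / (1 + p))) ^ (1 + p) := e1.symm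
      _ ≤ R ^ (1 + p) := Real.rpow_le_rpow hmpos.le hmR hppos.le
  have hD : R ^ ((h - 1) * (1 + p)) ≤ rj ^ ((h - 1) * p) * rj1 ^ (h - 1) := by
    have e2 : R ^ ((h - 1) * (1 + p)) = (R ^ (1 + p)) ^ (h - 1) := by
      rw [← Real.rpow_mul hRpos.le]; ring_nf
    have e3 : (rj ^ p * rj1) ^ (h - 1) = rj ^ ((h - 1) * p) * rj1 ^ (h - 1) := by
      rw [Real.mul_rpow (Real.rpow_pos_of_pos hrjpos p).le h0.le, ← Real.rpow_mul hrjpos.le]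
      ring_nf
    rw [e2, ← e3]
    exact Real.rpow_le_rpow_of_nonpos (mul_pos (Real.rpow_pos_of_pos hrjpos p) h0) key
      (by linarith)
  have hfin : R ^ (h + (h - 1) * p) ≤ R * (rj ^ ((h - 1) * p) * rj1 ^ (h - 1)) := by
    have e4 : R ^ (h + (h - 1) * p) = R * R ^ ((h - 1) * (1 + p)) := by
      rw [show h + (h - 1) * p = 1 + (h - 1) * (1 + p) by ring, Real.rpow_add hRpos,
        Real.rpow_one]
    rw [e4]
    exact mul_le_mul_of_nonneg_left hD hRpos.le
  rw [div_le_div_iff₀ (by positivity) hrpos]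
  calc R ^ (h + (h - 1) * p) * r ≤ R * (rj ^ ((h - 1) * p) * rj1 ^ (h - 1)) * r :=
        mul_le_mul_of_nonneg_right hfin hrpos.le
    _ = R * (r * rj ^ ((h - 1) * p) * rj1 ^ (h - 1)) := by ring
end
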